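/- For α ∈ (0,1)∪(1,∞) and a joint distribution p_{X,Y} = p_X p_{Y|X} on finite alphabets, the Arimoto mutual information satisfies I_α^A(X;Y) = min over distributions q_Y of D_α(p_{X_α} p_{Y|X} ‖ p_{X_α} q_Y), where p_{X_α} is the α-tilted distribution of p_X. -/

import Mathlib

open BigOperators

/-- `p` is a probability distribution on the finite set `X`. -/
def IsDist {X : Type*} [Fintype X] (p : X → ℝ) : Prop :=
  (∀ x, 0 ≤ p x) ∧ ∑ x, p x = 1

/-- `W` is a channel from `X` to `Y`. -/
def IsChannel {X Y : Type*} [Fintype Y] (W : X → Y → ℝ) : Prop :=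
  ∀ x, (∀ y, 0 ≤ W x y) ∧ ∑ y, W x y = 1

/-- The α-tilted (escort) distribution of `p`. -/
noncomputable def tilt {X : Type*} [Fintype X] (p : X → ℝ) (a : ℝ) : X → ℝ :=
  fun x => p x ^ a / ∑ x', p x' ^ a

/-- The Rényi entropy of order `a` of a distribution `p`. -/
noncomputable def renyi {X : Type*} [Fintype X] (p : X → ℝ) (a : ℝ) : ℝ :=
  (1 / (1 - a)) * Real.log (∑ x, p x ^ a)

lemma bern_neg {t p : ℝ} (ht : 0 < t) (hp : p ≤ 0) : 1 + p * (t - 1) ≤ t ^ p := by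
  have h1 := Real.add_one_le_exp (p * Real.log t)
  have h2 : Real.log t ≤ t - 1 := Real.log_le_sub_one_of_pos ht
  have h3 : p * (t - 1) ≤ p * Real.log t := mul_le_mul_of_nonpos_left h2 hp
  rw [Real.rpow_def_of_pos ht, mul_comm (Real.log t) p]
  linarith

lemma termid {r q α : ℝ} (hr : 0 < r) (hq : 0 < q) :
    r ^ α * q ^ (1 - α) = r * (q / r) ^ (1 - α) := by
  have h1 : r ^ α * r ^ (1 - α) = r := by
    rw [← Real.rpow_add hr]; norm_num
  have h2 : r ^ (1 - α) * (q / r) ^ (1 - α) = q ^ (1 - α) := by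
    rw [← Real.mul_rpow hr.le (div_nonneg hq.le hr.le), mul_div_cancel₀ _ hr.ne']
  calc r ^ α * q ^ (1 - α) = r ^ α * (r ^ (1 - α) * (q / r) ^ (1 - α)) := by rw [h2]
    _ = (r ^ α * r ^ (1 - α)) * (q / r) ^ (1 - α) := by ring
    _ = r * (q / r) ^ (1 - α) := by rw [h1]

lemma sum_tilt_le {Y : Type*} [Fintype Y] {α : ℝ} (hα0 : 0 < α) (hα : α < 1)
    {r q : Y → ℝ} (hr : ∀ y, 0 < r y) (hq : ∀ y, 0 < q y)
    (hrs : ∑ y, r y = 1) (hqs : ∑ y, q y = 1) :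
    ∑ y, r y ^ α * q y ^ (1 - α) ≤ 1 := by
  have key : ∀ y, r y ^ α * q y ^ (1 - α) ≤ r y + (1 - α) * (q y - r y) := by
    intro y
    rw [termid (hr y) (hq y)]
    have hs : (-1 : ℝ) ≤ q y / r y - 1 := by
      have : 0 < q y / r y := div_pos (hq y) (hr y); linarith
    have hb := rpow_one_add_le_one_add_mul_self hs (p := 1 - α) (by linarith) (by linarith)
    have hb' : (q y / r y) ^ (1 - α) ≤ 1 + (1 - α) * (q y / r y - 1) := by
      have : (1 : ℝ) + (q y / r y - 1) = q y / r y := by ring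
      rwa [this] at hb
    calc r y * (q y / r y) ^ (1 - α) ≤ r y * (1 + (1 - α) * (q y / r y - 1)) :=
          mul_le_mul_of_nonneg_left hb' (hr y).le
      _ = r y + (1 - α) * (q y - r y) := by
          have hqr : r y * (q y / r y) = q y := by
            rw [mul_comm]; exact div_mul_cancel₀ _ (hr y).ne'
          linear_combination (1 - α) * hqr
  calc ∑ y, r y ^ α * q y ^ (1 - α) ≤ ∑ y, (r y + (1 - α) * (q y - r y)) :=
        Finset.sum_le_sum fun y _ => key y
    _ = 1 := by
        rw [Finset.sum_add_distrib, ← Finset.mul_sum, Finset.sum_sub_distrib, hqs, hrs]; ring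

lemma one_le_sum_tilt {Y : Type*} [Fintype Y] {α : ℝ} (hα : 1 < α)
    {r q : Y → ℝ} (hr : ∀ y, 0 < r y) (hq : ∀ y, 0 < q y)
    (hrs : ∑ y, r y = 1) (hqs : ∑ y, q y = 1) :
    1 ≤ ∑ y, r y ^ α * q y ^ (1 - α) := by
  have key : ∀ y, r y + (1 - α) * (q y - r y) ≤ r y ^ α * q y ^ (1 - α) := by
    intro y
    rw [termid (hr y) (hq y)]
    have ht : 0 < q y / r y := div_pos (hq y) (hr y)
    have hb := bern_neg ht (p := 1 - α) (by linarith)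
    calc r y + (1 - α) * (q y - r y) = r y * (1 + (1 - α) * (q y / r y - 1)) := by
          have hqr : r y * (q y / r y) = q y := by
            rw [mul_comm]; exact div_mul_cancel₀ _ (hr y).ne'
          linear_combination (α - 1) * hqr
      _ ≤ r y * (q y / r y) ^ (1 - α) := mul_le_mul_of_nonneg_left hb (hr y).le
  calc (1:ℝ) = ∑ y, (r y + (1 - α) * (q y - r y)) := by
        rw [Finset.sum_add_distrib, ← Finset.mul_sum, Finset.sum_sub_distrib, hqs, hrs]; ring
    _ ≤ ∑ y, r y ^ α * q y ^ (1 - α) := Finset.sum_le_sum fun y _ => key y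

lemma div_formula {X Y : Type*} [Fintype X] [Fintype Y] [Nonempty X]
    (α : ℝ) (p : X → ℝ) (W : X → Y → ℝ) (q : Y → ℝ)
    (hps : ∀ x, 0 < p x) (hWnn : ∀ x y, 0 ≤ W x y) (hq : ∀ y, 0 < q y) :
    (∑ x, ∑ y, (tilt p α x * W x y) ^ α * (tilt p α x * q y) ^ (1 - α))
      = (∑ y, (∑ x, p x ^ α * W x y ^ α) * q y ^ (1 - α)) / (∑ x, p x ^ α) := by
  have hA : 0 < ∑ x', p x' ^ α :=
    Finset.sum_pos (fun x _ => Real.rpow_pos_of_pos (hps x) α) Finset.univ_nonempty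
  have htpos : ∀ x, 0 < tilt p α x := fun x =>
    div_pos (Real.rpow_pos_of_pos (hps x) α) hA
  have hterm : ∀ x y, (tilt p α x * W x y) ^ α * (tilt p α x * q y) ^ (1 - α)
      = p x ^ α * W x y ^ α * q y ^ (1 - α) / (∑ x', p x' ^ α) := by
    intro x y
    rw [Real.mul_rpow (htpos x).le (hWnn x y), Real.mul_rpow (htpos x).le (hq y).le]
    have h1 : tilt p α x ^ α * W x y ^ α * (tilt p α x ^ (1 - α) * q y ^ (1 - α))
        = (tilt p α x ^ α * tilt p α x ^ (1 - α)) * (W x y ^ α * q y ^ (1 - α)) := by ring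
    have h2 : tilt p α x ^ α * tilt p α x ^ (1 - α) = tilt p α x := by
      rw [← Real.rpow_add (htpos x)]; norm_num
    rw [h1, h2]
    unfold tilt
    ring
  calc (∑ x, ∑ y, (tilt p α x * W x y) ^ α * (tilt p α x * q y) ^ (1 - α))
      = ∑ x, ∑ y, p x ^ α * W x y ^ α * q y ^ (1 - α) / (∑ x', p x' ^ α) := by
        exact Finset.sum_congr rfl fun x _ => Finset.sum_congr rfl fun y _ => hterm x y
    _ = ∑ y, ∑ x, p x ^ α * W x y ^ α * q y ^ (1 - α) / (∑ x', p x' ^ α) := Finset.sum_comm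
    _ = ∑ y, (∑ x, p x ^ α * W x y ^ α) * q y ^ (1 - α) / (∑ x', p x' ^ α) := by
        refine Finset.sum_congr rfl fun y _ => ?_
        rw [← Finset.sum_div, ← Finset.sum_mul]
    _ = (∑ y, (∑ x, p x ^ α * W x y ^ α) * q y ^ (1 - α)) / (∑ x', p x' ^ α) := by
        rw [Finset.sum_div]

theorem arimotoMI_eq_min_renyiDiv_tilt {X Y : Type*} [Fintype X] [Fintype Y] [Nonempty Y]
    (α : ℝ) (hα0 : 0 < α) (hα1 : α ≠ 1)
    (p : X → ℝ) (W : X → Y → ℝ)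
    (hp : IsDist p) (hps : ∀ x, 0 < p x) (hW : IsChannel W)
    (hWc : ∀ y, ∃ x, 0 < W x y) :
    IsLeast {v : ℝ | ∃ q : Y → ℝ, IsDist q ∧ (∀ y, 0 < q y) ∧
        v = (1 / (α - 1)) * Real.log (∑ x, ∑ y,
              (tilt p α x * W x y) ^ α * (tilt p α x * q y) ^ (1 - α))}
      (renyi p α
        - (α / (1 - α)) * Real.log (∑ y, (∑ x, p x ^ α * W x y ^ α) ^ (1 / α))) := by
  have hXne : Nonempty X := by
    by_contra h
    rw [not_nonempty_iff] at h
    have := hp.2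
    rw [Finset.univ_eq_empty, Finset.sum_empty] at this
    norm_num at this
  -- basic positivity
  have hA : 0 < ∑ x, p x ^ α :=
    Finset.sum_pos (fun x _ => Real.rpow_pos_of_pos (hps x) α) Finset.univ_nonempty
  set c : Y → ℝ := fun y => ∑ x, p x ^ α * W x y ^ α with hc_def
  have hc : ∀ y, 0 < c y := by
    intro y
    obtain ⟨x0, hx0⟩ := hWc y
    refine Finset.sum_pos' (fun x _ => mul_nonneg (Real.rpow_nonneg (hps x).le α)
      (Real.rpow_nonneg ((hW x).1 y) α)) ⟨x0, Finset.mem_univ _, ?_⟩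
    exact mul_pos (Real.rpow_pos_of_pos (hps x0) α) (Real.rpow_pos_of_pos hx0 α)
  set T : ℝ := ∑ y, c y ^ (1 / α) with hT_def
  have hT : 0 < T :=
    Finset.sum_pos (fun y _ => Real.rpow_pos_of_pos (hc y) _) Finset.univ_nonempty
  -- the optimal output distribution
  set r : Y → ℝ := fun y => c y ^ (1 / α) / T with hr_def
  have hrpos : ∀ y, 0 < r y := fun y => div_pos (Real.rpow_pos_of_pos (hc y) _) hT
  have hrsum : ∑ y, r y = 1 := by
    rw [hr_def, ← Finset.sum_div, ← hT_def, div_self hT.ne']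
  -- the target value equals (1/(α-1)) * log (T^α / A)
  have hTα : 0 < T ^ α := Real.rpow_pos_of_pos hT α
  have hVeq : renyi p α - (α / (1 - α)) * Real.log (∑ y, c y ^ (1 / α))
      = (1 / (α - 1)) * Real.log (T ^ α / (∑ x, p x ^ α)) := by
    rw [Real.log_div hTα.ne' hA.ne', Real.log_rpow hT, renyi, ← hT_def]
    have h1 : α - 1 ≠ 0 := sub_ne_zero.mpr hα1
    have h2 : (1:ℝ) - α ≠ 0 := sub_ne_zero.mpr (Ne.symm hα1)
    field_simp
    ring
  -- value of F at the optimal r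
  have hFr : ∑ y, c y * r y ^ (1 - α) = T ^ α := by
    have hterm : ∀ y, c y * r y ^ (1 - α) = c y ^ (1 / α) / T ^ (1 - α) := by
      intro y
      rw [hr_def]
      simp only
      rw [Real.div_rpow (Real.rpow_nonneg (hc y).le _) hT.le,
        ← Real.rpow_mul (hc y).le, mul_div_assoc']
      have hcc : c y * c y ^ (1 / α * (1 - α)) = c y ^ (1 / α) := by
        nth_rewrite 1 [← Real.rpow_one (c y)]
        rw [← Real.rpow_add (hc y)]
        congr 1
        field_simp
        ring
      rw [hcc]
    rw [Finset.sum_congr rfl fun y _ => hterm y, ← Finset.sum_div, ← hT_def]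
    nth_rewrite 1 [← Real.rpow_one T]
    rw [← Real.rpow_sub hT]
    norm_num
  -- c y = T^α * r y ^ α
  have hcr : ∀ y, c y = T ^ α * r y ^ α := by
    intro y
    rw [← Real.mul_rpow hT.le (hrpos y).le, hr_def]
    simp only
    rw [mul_div_cancel₀ _ hT.ne', ← Real.rpow_mul (hc y).le,
      one_div_mul_cancel hα0.ne', Real.rpow_one]
  constructor
  · -- membership: take q = r
    refine ⟨r, ⟨fun y => (hrpos y).le, hrsum⟩, hrpos, ?_⟩
    rw [div_formula α p W r hps (fun x y => (hW x).1 y) hrpos]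
    have hrw : (∑ y, (∑ x, p x ^ α * W x y ^ α) * r y ^ (1 - α)) = T ^ α := hFr
    rw [hrw, ← hVeq]
  · -- lower bound
    rintro v ⟨q, hqd, hqpos, rfl⟩
    rw [div_formula α p W q hps (fun x y => (hW x).1 y) hqpos, hVeq]
    have hrw : (∑ y, (∑ x, p x ^ α * W x y ^ α) * q y ^ (1 - α))
        = ∑ y, c y * q y ^ (1 - α) := rfl
    have hFq : ∑ y, c y * q y ^ (1 - α)
        = T ^ α * ∑ y, r y ^ α * q y ^ (1 - α) := by
      rw [Finset.mul_sum]
      refine Finset.sum_congr rfl fun y _ => ?_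
      rw [hcr y, mul_assoc]
    have hSpos : 0 < ∑ y, r y ^ α * q y ^ (1 - α) :=
      Finset.sum_pos (fun y _ => mul_pos (Real.rpow_pos_of_pos (hrpos y) _)
        (Real.rpow_pos_of_pos (hqpos y) _)) Finset.univ_nonempty
    have hFqpos : 0 < ∑ y, c y * q y ^ (1 - α) := by
      rw [hFq]; exact mul_pos hTα hSpos
    rcases lt_or_gt_of_ne hα1 with hlt | hgt
    · -- α < 1 : F ≤ T^α and 1/(α-1) ≤ 0
      have hS : ∑ y, r y ^ α * q y ^ (1 - α) ≤ 1 :=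
        sum_tilt_le hα0 hlt hrpos hqpos hrsum hqd.2
      have hF : ∑ y, c y * q y ^ (1 - α) ≤ T ^ α := by
        rw [hFq]
        calc T ^ α * ∑ y, r y ^ α * q y ^ (1 - α) ≤ T ^ α * 1 :=
              mul_le_mul_of_nonneg_left hS hTα.le
          _ = T ^ α := mul_one _
      have hlog : Real.log ((∑ y, c y * q y ^ (1 - α)) / (∑ x, p x ^ α))
          ≤ Real.log (T ^ α / (∑ x, p x ^ α)) := by
        apply Real.log_le_log (div_pos hFqpos hA)
        exact div_le_div_of_nonneg_right hF hA.le
      have hneg : (1 : ℝ) / (α - 1) ≤ 0 := by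
        apply div_nonpos_of_nonneg_of_nonpos <;> linarith
      exact mul_le_mul_of_nonpos_left hlog hneg
    · -- 1 < α : T^α ≤ F and 0 ≤ 1/(α-1)
      have hS : 1 ≤ ∑ y, r y ^ α * q y ^ (1 - α) :=
        one_le_sum_tilt hgt hrpos hqpos hrsum hqd.2
      have hF : T ^ α ≤ ∑ y, c y * q y ^ (1 - α) := by
        rw [hFq]
        calc T ^ α = T ^ α * 1 := (mul_one _).symm
          _ ≤ T ^ α * ∑ y, r y ^ α * q y ^ (1 - α) :=
              mul_le_mul_of_nonneg_left hS hTα.le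
      have hlog : Real.log (T ^ α / (∑ x, p x ^ α))
          ≤ Real.log ((∑ y, c y * q y ^ (1 - α)) / (∑ x, p x ^ α)) := by
        apply Real.log_le_log (div_pos hTα hA)
        exact div_le_div_of_nonneg_right hF hA.le
      have hpos : (0 : ℝ) ≤ 1 / (α - 1) := by
        have : (0:ℝ) < α - 1 := by linarith
        positivity
      exact mul_le_mul_of_nonneg_left hlog hpos
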